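/- (Kruskal's theorem.) Let C ≥ 1 and let A, Ā be I×C real matrices, B, B̄ be J×C real matrices, and D, D̄ be K×C real matrices such that Σ_{c=1}^C A_{ic} B_{jc} D_{kc} = Σ_{c=1}^C Ā_{ic} B̄_{jc} D̄_{kc} for all indices (i, j, k). If the Kruskal ranks satisfy rank_K(A) + rank_K(B) + rank_K(D) ≥ 2C + 2, then there exist a permutation σ of {1,…,C} and nonzero real scalars a_c, b_c, d_c with a_c·b_c·d_c = 1 for each c, such that Ā_{·c} = a_c·A_{·σ(c)}, B̄_{·c} = b_c·B_{·σ(c)}, and D̄_{·c} = d_c·D_{·σ(c)} for every c; that is, the three-way decomposition is unique up to simultaneous permutation and rescaling of columns. -/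

import Mathlib

/-- Kruskal rank of a real matrix: the largest `k` such that every set of `k`
columns is linearly independent. -/
noncomputable def kruskalRank {ι : Type*} {n : ℕ} (A : Matrix ι (Fin n) ℝ) : ℕ :=
  sSup {k | k ≤ n ∧ ∀ s : Finset (Fin n), s.card = k →
    LinearIndependent ℝ (fun c : s => fun i => A i (c : Fin n))}

namespace Kru

open Finset Submodule Module
open scoped Classical

variable {I J K C : ℕ}




noncomputable def supp (x : Fin C → ℝ) : Finset (Fin C) := Finset.univ.filter (fun c => x c ≠ 0)

lemma mem_supp {x : Fin C → ℝ} {c : Fin C} : c ∈ supp x ↔ x c ≠ 0 := by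
  simp [supp]

lemma not_mem_supp {x : Fin C → ℝ} {c : Fin C} : c ∉ supp x ↔ x c = 0 := by
  simp [supp]

def NullV (M : Matrix (Fin I) (Fin C) ℝ) (x : Fin C → ℝ) : Prop := ∀ r, ∑ c, x c * M r c = 0

def col (M : Matrix (Fin I) (Fin C) ℝ) (c : Fin C) : Fin I → ℝ := fun r => M r c

lemma kruskal_spec (A : Matrix (Fin I) (Fin C) ℝ) :
    kruskalRank A ≤ C ∧ ∀ s : Finset (Fin C), s.card = kruskalRank A →
      LinearIndependent ℝ (fun c : s => fun i => A i (c : Fin C)) := by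
  have h0 : (0 : ℕ) ∈ {k | k ≤ C ∧ ∀ s : Finset (Fin C), s.card = k →
      LinearIndependent ℝ (fun c : s => fun i => A i (c : Fin C))} := by
    refine ⟨Nat.zero_le _, fun s hs => ?_⟩
    have : s = ∅ := Finset.card_eq_zero.mp hs
    subst this
    have : IsEmpty ((∅ : Finset (Fin C)) : Type) := by
      simp only [Finset.isEmpty_coe_sort]
    exact linearIndependent_empty_type
  have hbdd : BddAbove {k | k ≤ C ∧ ∀ s : Finset (Fin C), s.card = k →
      LinearIndependent ℝ (fun c : s => fun i => A i (c : Fin C))} :=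
    ⟨C, fun k hk => hk.1⟩
  exact Nat.sSup_mem ⟨0, h0⟩ hbdd

lemma kr_le (A : Matrix (Fin I) (Fin C) ℝ) : kruskalRank A ≤ C := (kruskal_spec A).1

/-- Null vectors of weight at most the Kruskal rank are zero. -/
lemma kr_null (A : Matrix (Fin I) (Fin C) ℝ) (x : Fin C → ℝ)
    (hx : NullV A x) (hw : (supp x).card ≤ kruskalRank A) : x = 0 := by
  obtain ⟨hle, hind⟩ := kruskal_spec A
  obtain ⟨T, hsub, hT⟩ := Finset.exists_superset_card_eq hw (by simpa using hle)
  have hindT := hind T hT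
  rw [Fintype.linearIndependent_iff] at hindT
  have key : ∀ c : T, x (c : Fin C) = 0 := by
    apply hindT (fun c : T => x (c : Fin C))
    funext i
    simp only [Finset.sum_apply, Pi.smul_apply, smul_eq_mul, Pi.zero_apply]
    rw [Finset.sum_coe_sort T (fun c => x c * A i c)]
    rw [Finset.sum_subset (Finset.subset_univ T) (fun c _ hc => by
      have hxc : x c = 0 := by
        by_contra h
        exact hc (hsub (mem_supp.mpr h))
      rw [hxc, zero_mul])]
    exact hx i
  funext c
  by_cases hc : c ∈ T
  · exact key ⟨c, hc⟩
  · by_contra h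
    exact hc (hsub (mem_supp.mpr h))

lemma col_ne_zero (A : Matrix (Fin I) (Fin C) ℝ) (h1 : 1 ≤ kruskalRank A) (c : Fin C) :
    col A c ≠ 0 := by
  intro h
  have hx : NullV A (Pi.single c 1) := by
    intro r
    rw [Finset.sum_eq_single c]
    · have := congrFun h r
      simp only [col, Pi.zero_apply] at this
      simp [this]
    · intro b _ hb; simp [Pi.single_eq_of_ne hb]
    · simp
  have hw : (supp (Pi.single c (1:ℝ))).card ≤ kruskalRank A := by
    have : supp (Pi.single c (1:ℝ)) ⊆ {c} := by
      intro b hb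
      rw [mem_supp] at hb
      by_contra hbc
      simp only [Finset.mem_singleton] at hbc
      exact hb (Pi.single_eq_of_ne hbc 1)
    calc (supp (Pi.single c (1:ℝ))).card ≤ ({c} : Finset (Fin C)).card := Finset.card_le_card this
    _ = 1 := by simp
    _ ≤ _ := h1
  have := congrFun (kr_null A _ hx hw) c
  simp at this





lemma dot_functional (f : (Fin K → ℝ) →ₗ[ℝ] ℝ) (w : Fin K → ℝ) :
    ∑ r, f (fun j => if r = j then 1 else 0) * w r = f w := by
  rw [LinearMap.pi_apply_eq_sum_univ f w]
  apply Finset.sum_congr rfl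
  intro r _
  rw [smul_eq_mul]
  ring

/-- A linear functional vanishing on `W` but not at `g ∉ W`, as a dot product. -/
lemma exists_functional_single (W : Submodule ℝ (Fin K → ℝ)) (g : Fin K → ℝ) (hg : g ∉ W) :
    ∃ z : Fin K → ℝ, (∀ w ∈ W, ∑ r, z r * w r = 0) ∧ ∑ r, z r * g r ≠ 0 := by
  have hmk : W.mkQ g ≠ 0 := by
    rw [Submodule.mkQ_apply, ne_eq, Submodule.Quotient.mk_eq_zero]
    exact hg
  set b := Module.finBasis ℝ ((Fin K → ℝ) ⧸ W) with hb
  have hrepr : b.repr (W.mkQ g) ≠ 0 := fun h => hmk (b.repr.map_eq_zero_iff.mp h)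
  have hex : ∃ i, b.repr (W.mkQ g) i ≠ 0 := by
    by_contra h
    push_neg at h
    exact hrepr (Finsupp.ext h)
  obtain ⟨i, hi⟩ := hex
  set f : (Fin K → ℝ) →ₗ[ℝ] ℝ := (b.coord i).comp W.mkQ with hf
  refine ⟨fun r => f (fun j => if r = j then 1 else 0), ?_, ?_⟩
  · intro w hw
    rw [dot_functional f w]
    simp only [hf, LinearMap.comp_apply]
    have : W.mkQ w = 0 := by
      rw [Submodule.mkQ_apply, Submodule.Quotient.mk_eq_zero]; exact hw
    rw [this, map_zero]
  · rw [dot_functional f g]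
    simpa [hf, Basis.coord_apply] using hi

/-- Generic vector: vanishes on `W`, nonzero against finitely many targets outside `W`. -/
lemma exists_generic (W : Submodule ℝ (Fin K → ℝ)) (gs : Finset (Fin K → ℝ))
    (hgs : ∀ g ∈ gs, g ∉ W) :
    ∃ z : Fin K → ℝ, (∀ w ∈ W, ∑ r, z r * w r = 0) ∧ ∀ g ∈ gs, ∑ r, z r * g r ≠ 0 := by
  classical
  induction gs using Finset.induction_on with
  | empty => exact ⟨0, by simp, by simp⟩
  | @insert g s hgnotin ih =>
    obtain ⟨z, hz0, hz⟩ := ih (fun g' hg' => hgs g' (Finset.mem_insert_of_mem hg'))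
    obtain ⟨z', hz'0, hz'⟩ := exists_functional_single W g (hgs g (Finset.mem_insert_self g s))
    obtain ⟨t, ht⟩ := Infinite.exists_notMem_finset ((insert g s).image
      (fun h => -(∑ r, z r * h r) / (∑ r, z' r * h r)))
    have hexp : ∀ w : Fin K → ℝ, ∑ r, (z + t • z') r * w r
        = (∑ r, z r * w r) + t * ∑ r, z' r * w r := by
      intro w
      rw [Finset.mul_sum, ← Finset.sum_add_distrib]
      apply Finset.sum_congr rfl; intro r _
      simp only [Pi.add_apply, Pi.smul_apply, smul_eq_mul]
      ring
    refine ⟨z + t • z', ?_, ?_⟩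
    · intro w hw
      rw [hexp w, hz0 w hw, hz'0 w hw]; ring
    · intro g' hg'
      rw [hexp g']
      intro habs
      rcases Finset.mem_insert.mp hg' with h | h
      · subst h
        have hbb : (∑ r, z' r * g' r) ≠ 0 := hz'
        have : t = -(∑ r, z r * g' r) / (∑ r, z' r * g' r) := by
          field_simp
          linarith
        exact ht (Finset.mem_image.mpr ⟨g', hg', this.symm⟩)
      · have ha : (∑ r, z r * g' r) ≠ 0 := hz g' h
        by_cases hbb : (∑ r, z' r * g' r) = 0
        · rw [hbb, mul_zero, add_zero] at habs
          exact ha habs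
        · have : t = -(∑ r, z r * g' r) / (∑ r, z' r * g' r) := by
            field_simp
            linarith
          exact ht (Finset.mem_image.mpr ⟨g', hg', this.symm⟩)



noncomputable def phiMap (X : Matrix (Fin I) (Fin C) ℝ) (Y : Matrix (Fin J) (Fin C) ℝ)
    (lam : Fin C → ℝ) : (Fin J → ℝ) →ₗ[ℝ] (Fin I → ℝ) :=
  Matrix.mulVecLin (Matrix.of fun i j => ∑ c, lam c * Y j c * X i c)

lemma phiMap_apply (X : Matrix (Fin I) (Fin C) ℝ) (Y : Matrix (Fin J) (Fin C) ℝ)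
    (lam : Fin C → ℝ) (y : Fin J → ℝ) (i : Fin I) :
    phiMap X Y lam y i = ∑ c, lam c * (∑ j, Y j c * y j) * X i c := by
  simp only [phiMap, Matrix.mulVecLin_apply, Matrix.mulVec, dotProduct, Matrix.of_apply]
  simp only [Finset.sum_mul]
  rw [Finset.sum_comm]
  apply Finset.sum_congr rfl
  intro c _
  conv_rhs => rw [Finset.mul_sum, Finset.sum_mul]
  apply Finset.sum_congr rfl
  intro j _
  ring

/-- Upper bound: rank of `phiMap` is at most the weight of the coefficient vector. -/
lemma rank_upper (X : Matrix (Fin I) (Fin C) ℝ) (Y : Matrix (Fin J) (Fin C) ℝ)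
    (lam : Fin C → ℝ) :
    finrank ℝ (LinearMap.range (phiMap X Y lam)) ≤ (supp lam).card := by
  classical
  have hle : LinearMap.range (phiMap X Y lam)
      ≤ span ℝ (((supp lam).image (col X) : Finset (Fin I → ℝ)) : Set (Fin I → ℝ)) := by
    rintro v ⟨y, rfl⟩
    have : phiMap X Y lam y = ∑ c ∈ supp lam, (lam c * ∑ j, Y j c * y j) • col X c := by
      funext i
      rw [phiMap_apply]
      rw [Finset.sum_apply]
      rw [← Finset.sum_subset (Finset.subset_univ (supp lam))]
      · apply Finset.sum_congr rfl; intro c _; simp [col]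
      · intro c _ hc
        have : lam c = 0 := by
          by_contra h; exact hc (mem_supp.mpr h)
        simp [this]
    rw [this]
    apply Submodule.sum_mem
    intro c hc
    apply Submodule.smul_mem
    apply Submodule.subset_span
    simp only [Finset.coe_image, Set.mem_image, Finset.mem_coe]
    exact ⟨c, hc, rfl⟩
  calc finrank ℝ (LinearMap.range (phiMap X Y lam))
      ≤ finrank ℝ (span ℝ (((supp lam).image (col X) : Finset (Fin I → ℝ)) : Set (Fin I → ℝ))) :=
        Submodule.finrank_mono hle
    _ ≤ ((supp lam).image (col X)).card := by
        simpa [Set.finrank] using finrank_span_finset_le_card ((supp lam).image (col X))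
    _ ≤ (supp lam).card := Finset.card_image_le

/-- Lower bound (Kruskal's rank lemma, additive form). -/
lemma rank_lower (X : Matrix (Fin I) (Fin C) ℝ) (Y : Matrix (Fin J) (Fin C) ℝ)
    (lam : Fin C → ℝ) :
    min (kruskalRank X) (supp lam).card + min (kruskalRank Y) (supp lam).card
      ≤ (supp lam).card + finrank ℝ (LinearMap.range (phiMap X Y lam)) := by
  classical
  set S := supp lam with hS
  set ω := S.card with hω
  set LA : ({c // c ∈ S} → ℝ) →ₗ[ℝ] (Fin I → ℝ) :=
    Matrix.mulVecLin (Matrix.of fun i (c : {c // c ∈ S}) => X i (c : Fin C)) with hLA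
  set LB : (Fin J → ℝ) →ₗ[ℝ] ({c // c ∈ S} → ℝ) :=
    Matrix.mulVecLin (Matrix.of fun (c : {c // c ∈ S}) j => lam (c : Fin C) * Y j (c : Fin C)) with hLB
  have hLAapp : ∀ (w : {c // c ∈ S} → ℝ) i, LA w i = ∑ c : {c // c ∈ S}, X i (c : Fin C) * w c := by
    intro w i
    simp [hLA, Matrix.mulVecLin_apply, Matrix.mulVec, dotProduct]
  have hLBapp : ∀ (y : Fin J → ℝ) (c : {c // c ∈ S}), LB y c
      = lam (c : Fin C) * ∑ j, Y j (c : Fin C) * y j := by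
    intro y c
    simp only [hLB, Matrix.mulVecLin_apply, Matrix.mulVec, dotProduct, Matrix.of_apply]
    rw [Finset.mul_sum]
    apply Finset.sum_congr rfl
    intro j _
    ring
  have hcomp : phiMap X Y lam = LA.comp LB := by
    apply LinearMap.ext
    intro y
    funext i
    rw [phiMap_apply]
    simp only [LinearMap.comp_apply]
    rw [hLAapp]
    have : ∀ c : {c // c ∈ S}, X i (c : Fin C) * LB y c
        = lam (c : Fin C) * (∑ j, Y j (c : Fin C) * y j) * X i (c : Fin C) := by
      intro c; rw [hLBapp]; ring
    rw [Finset.sum_congr rfl (fun c _ => this c)]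
    rw [Finset.sum_coe_sort S (fun c => lam c * (∑ j, Y j c * y j) * X i c)]
    rw [Finset.sum_subset (Finset.subset_univ S)]
    intro c _ hc
    have : lam c = 0 := by
      by_contra h; exact hc (mem_supp.mpr h)
    simp [this]
  -- Sylvester step
  have sylv : finrank ℝ (LinearMap.range LB)
      ≤ finrank ℝ (LinearMap.range (phiMap X Y lam)) + finrank ℝ (LinearMap.ker LA) := by
    have h1 := LinearMap.finrank_range_add_finrank_ker (LA.domRestrict (LinearMap.range LB))
    have h2 : LinearMap.range (LA.domRestrict (LinearMap.range LB))
        = Submodule.map LA (LinearMap.range LB) := LinearMap.range_domRestrict _ _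
    have h3 : Submodule.map LA (LinearMap.range LB) = LinearMap.range (phiMap X Y lam) := by
      rw [hcomp, LinearMap.range_comp]
    have h4 : finrank ℝ (LinearMap.ker (LA.domRestrict (LinearMap.range LB)))
        ≤ finrank ℝ (LinearMap.ker LA) := by
      rw [← Submodule.finrank_map_subtype_eq (LinearMap.range LB)]
      apply Submodule.finrank_mono
      rintro v ⟨w, hw, rfl⟩
      have : LA ((LinearMap.range LB).subtype w) = 0 := by
        simpa [LinearMap.domRestrict_apply] using hw
      exact this
    calc finrank ℝ (LinearMap.range LB)
        = finrank ℝ (LinearMap.range (LA.domRestrict (LinearMap.range LB)))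
          + finrank ℝ (LinearMap.ker (LA.domRestrict (LinearMap.range LB))) := h1.symm
      _ ≤ finrank ℝ (LinearMap.range (phiMap X Y lam)) + finrank ℝ (LinearMap.ker LA) := by
          rw [h2, h3]; exact Nat.add_le_add le_rfl h4
  -- lower bound for LA
  have hXlow : min (kruskalRank X) ω ≤ finrank ℝ (LinearMap.range LA) := by
    obtain ⟨S', hS'sub, hS'card⟩ :=
      Finset.exists_subset_card_eq (min_le_right (kruskalRank X) ω)
    have hind : LinearIndependent ℝ (fun c : {c // c ∈ S'} => col X (c : Fin C)) := by
      rw [Fintype.linearIndependent_iff]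
      intro g hg
      set x : Fin C → ℝ := fun c => if h : c ∈ S' then g ⟨c, h⟩ else 0 with hx
      have hnull : NullV X x := by
        intro r
        have e1 : ∑ c, x c * X r c = ∑ c ∈ S', x c * X r c := by
          rw [Finset.sum_subset (Finset.subset_univ S')]
          intro c _ hc
          have : x c = 0 := by simp [hx, hc]
          rw [this, zero_mul]
        rw [e1, ← Finset.sum_coe_sort S' (fun c => x c * X r c)]
        have e2 : ∀ c : {c // c ∈ S'}, x (c : Fin C) * X r (c : Fin C)
            = g c * X r (c : Fin C) := by
          intro c
          simp [hx, c.2]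
        rw [Finset.sum_congr rfl (fun c _ => e2 c)]
        have := congrFun hg r
        simpa [col] using this
      have hw : (supp x).card ≤ kruskalRank X := by
        have hsupp : supp x ⊆ S' := by
          intro c hc
          rw [mem_supp] at hc
          by_contra h
          simp [hx, h] at hc
        calc (supp x).card ≤ S'.card := Finset.card_le_card hsupp
          _ = min (kruskalRank X) ω := hS'card
          _ ≤ kruskalRank X := min_le_left _ _
      have hx0 := kr_null X x hnull hw
      intro c
      have : x (c : Fin C) = 0 := by rw [hx0]; rfl
      simpa [hx, c.2] using this
    have hspan : span ℝ (Set.range (fun c : {c // c ∈ S'} => col X (c : Fin C)))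
        ≤ LinearMap.range LA := by
      rw [Submodule.span_le]
      rintro v ⟨c, rfl⟩
      refine ⟨(fun c' : {c // c ∈ S} => if (c' : Fin C) = (c : Fin C) then 1 else 0), ?_⟩
      funext i
      rw [hLAapp]
      have : ∀ c' : {c // c ∈ S},
          X i (c' : Fin C) * (if (c' : Fin C) = (c : Fin C) then 1 else 0)
          = if (c' : Fin C) = (c : Fin C) then X i (c' : Fin C) else 0 := by
        intro c'; split <;> simp
      rw [Finset.sum_congr rfl (fun c' _ => this c')]
      have hmem : (c : Fin C) ∈ S := hS'sub c.2
      rw [Finset.sum_coe_sort S (fun t => if t = (c : Fin C) then X i t else 0),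
        Finset.sum_ite_eq' S (c : Fin C) (fun t => X i t)]
      simp [hmem, col]
    calc min (kruskalRank X) ω = S'.card := hS'card.symm
      _ = Fintype.card {c // c ∈ S'} := (Fintype.card_coe S').symm
      _ = finrank ℝ (span ℝ (Set.range (fun c : {c // c ∈ S'} => col X (c : Fin C)))) :=
          (finrank_span_eq_card hind).symm
      _ ≤ finrank ℝ (LinearMap.range LA) := Submodule.finrank_mono hspan
  -- lower bound for LB
  have hYlow : min (kruskalRank Y) ω ≤ finrank ℝ (LinearMap.range LB) := by
    obtain ⟨S'', hS''sub, hS''card⟩ :=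
      Finset.exists_subset_card_eq (min_le_right (kruskalRank Y) ω)
    set incl : {c // c ∈ S''} → {c // c ∈ S} := fun c => ⟨c.1, hS''sub c.2⟩ with hincl
    set ev : (Fin J → ℝ) →ₗ[ℝ] ({c // c ∈ S''} → ℝ) :=
      (LinearMap.funLeft ℝ ℝ incl).comp LB with hev
    have hevapp : ∀ (y : Fin J → ℝ) (c : {c // c ∈ S''}), ev y c
        = lam (c : Fin C) * ∑ j, Y j (c : Fin C) * y j := by
      intro y c
      simp only [hev, LinearMap.comp_apply, LinearMap.funLeft_apply]
      rw [hLBapp]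
    set lin : ({c // c ∈ S''} → ℝ) →ₗ[ℝ] (Fin J → ℝ) :=
      Matrix.mulVecLin (Matrix.of fun j (c : {c // c ∈ S''}) =>
        lam (c : Fin C) * Y j (c : Fin C)) with hlin
    have hlinapp : ∀ (x : {c // c ∈ S''} → ℝ) (j : Fin J),
        lin x j = ∑ c : {c // c ∈ S''}, lam (c : Fin C) * Y j (c : Fin C) * x c := by
      intro x j
      simp [hlin, Matrix.mulVecLin_apply, Matrix.mulVec, dotProduct, mul_assoc]
    have hGinj : Function.Injective (ev.comp lin) := by
      rw [← LinearMap.ker_eq_bot, LinearMap.ker_eq_bot']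
      intro x hx
      set y := lin x with hy
      have hevy : ev y = 0 := hx
      have hsq : ∑ j, y j * y j = 0 := by
        have hyj : ∀ j, y j = ∑ c : {c // c ∈ S''}, lam (c : Fin C) * Y j (c : Fin C) * x c :=
          fun j => by rw [hy]; exact hlinapp x j
        have e1 : ∑ j, y j * y j = ∑ c : {c // c ∈ S''}, x c * ev y c := by
          calc ∑ j, y j * y j
              = ∑ j, ∑ c : {c // c ∈ S''}, y j * (lam (c : Fin C) * Y j (c : Fin C) * x c) := by
                apply Finset.sum_congr rfl; intro j _
                rw [← Finset.mul_sum, ← hyj j]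
            _ = ∑ c : {c // c ∈ S''}, ∑ j, y j * (lam (c : Fin C) * Y j (c : Fin C) * x c) :=
                Finset.sum_comm
            _ = ∑ c : {c // c ∈ S''}, x c * ev y c := by
                apply Finset.sum_congr rfl; intro c _
                rw [hevapp y c, Finset.mul_sum, Finset.mul_sum]
                apply Finset.sum_congr rfl; intro j _
                ring
        rw [e1, hevy]
        simp
      have hy0 : y = 0 := by
        funext j
        have h1 : ∀ j ∈ Finset.univ, (0:ℝ) ≤ y j * y j := fun j _ => mul_self_nonneg (y j)
        have := (Finset.sum_eq_zero_iff_of_nonneg h1).mp hsq j (Finset.mem_univ j)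
        exact mul_self_eq_zero.mp this
      set x' : Fin C → ℝ := fun c => if h : c ∈ S'' then lam c * x ⟨c, h⟩ else 0 with hx'
      have hnull : NullV Y x' := by
        intro r
        have e1 : ∑ c, x' c * Y r c = ∑ c ∈ S'', x' c * Y r c := by
          rw [Finset.sum_subset (Finset.subset_univ S'')]
          intro c _ hc
          simp [hx', hc]
        rw [e1, ← Finset.sum_coe_sort S'' (fun c => x' c * Y r c)]
        have e2 : ∀ c : {c // c ∈ S''}, x' (c : Fin C) * Y r (c : Fin C)
            = lam (c : Fin C) * Y r (c : Fin C) * x c := by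
          intro c
          simp only [hx', c.2, dif_pos]
          ring
        rw [Finset.sum_congr rfl (fun c _ => e2 c), ← hlinapp x r, ← hy]
        rw [hy0]
        rfl
      have hw : (supp x').card ≤ kruskalRank Y := by
        have hsupp : supp x' ⊆ S'' := by
          intro c hc
          rw [mem_supp] at hc
          by_contra h
          simp [hx', h] at hc
        calc (supp x').card ≤ S''.card := Finset.card_le_card hsupp
          _ = min (kruskalRank Y) ω := hS''card
          _ ≤ kruskalRank Y := min_le_left _ _
      have hx'0 := kr_null Y x' hnull hw
      funext c
      have h1 : x' (c : Fin C) = 0 := by rw [hx'0]; rfl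
      have h2 : lam (c : Fin C) * x c = 0 := by
        simpa [hx', c.2] using h1
      have h3 : lam (c : Fin C) ≠ 0 := mem_supp.mp (hS''sub c.2)
      have := mul_eq_zero.mp h2
      tauto
    have hGsurj : Function.Surjective (ev.comp lin) :=
      LinearMap.injective_iff_surjective.mp hGinj
    have hevsurj : Function.Surjective ev := by
      intro w
      obtain ⟨x, hx⟩ := hGsurj w
      exact ⟨lin x, hx⟩
    have hevrank : finrank ℝ (LinearMap.range ev) = min (kruskalRank Y) ω := by
      rw [LinearMap.range_eq_top.mpr hevsurj]
      rw [finrank_top, Module.finrank_fintype_fun_eq_card, Fintype.card_coe, hS''card]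
    have hle2 : finrank ℝ (LinearMap.range ev) ≤ finrank ℝ (LinearMap.range LB) := by
      rw [hev, LinearMap.range_comp]
      exact Submodule.finrank_map_le _ _
    omega
  -- rank-nullity for LA
  have hrnLA := LinearMap.finrank_range_add_finrank_ker LA
  have hdim : finrank ℝ ({c // c ∈ S} → ℝ) = ω := by
    rw [Module.finrank_fintype_fun_eq_card, Fintype.card_coe]
  rw [hdim] at hrnLA
  omega





/-- Condition (P) of the permutation lemma, for the third mode. -/
lemma stepP (X Xb : Matrix (Fin I) (Fin C) ℝ) (Y Yb : Matrix (Fin J) (Fin C) ℝ)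
    (H Hb : Matrix (Fin K) (Fin C) ℝ)
    (heq : ∀ i j r, ∑ c, X i c * Y j c * H r c = ∑ c, Xb i c * Yb j c * Hb r c)
    (hXH : C + 2 ≤ kruskalRank X + kruskalRank H)
    (hYH : C + 2 ≤ kruskalRank Y + kruskalRank H)
    (hsum : 2*C + 2 ≤ kruskalRank X + kruskalRank Y + kruskalRank H)
    (z : Fin K → ℝ)
    (hthr : (supp (fun c => ∑ r, z r * Hb r c)).card + kruskalRank H ≤ C + 1) :
    (supp (fun c => ∑ r, z r * H r c)).card ≤ (supp (fun c => ∑ r, z r * Hb r c)).card := by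
  classical
  set lam : Fin C → ℝ := fun c => ∑ r, z r * H r c with hlam
  set mu : Fin C → ℝ := fun c => ∑ r, z r * Hb r c with hmu
  have hphi : phiMap X Y lam = phiMap Xb Yb mu := by
    unfold phiMap
    congr 1
    funext i j
    simp only [Matrix.of_apply]
    have e : ∀ (P : Matrix (Fin I) (Fin C) ℝ) (Q : Matrix (Fin J) (Fin C) ℝ)
        (R : Matrix (Fin K) (Fin C) ℝ),
        ∑ c, (∑ r, z r * R r c) * Q j c * P i c
          = ∑ r, z r * ∑ c, P i c * Q j c * R r c := by
      intro P Q R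
      simp only [Finset.sum_mul]
      rw [Finset.sum_comm]
      apply Finset.sum_congr rfl
      intro r _
      rw [Finset.mul_sum]
      apply Finset.sum_congr rfl
      intro c _
      ring
    rw [e X Y H, e Xb Yb Hb]
    apply Finset.sum_congr rfl
    intro r _
    rw [heq i j r]
  have hlow := rank_lower X Y lam
  have hup := rank_upper Xb Yb mu
  rw [hphi] at hlow
  have hωC : (supp lam).card ≤ C := by
    calc (supp lam).card ≤ (Finset.univ : Finset (Fin C)).card := Finset.card_le_univ _
      _ = C := by simp
  have hωbC : (supp mu).card ≤ C := by
    calc (supp mu).card ≤ (Finset.univ : Finset (Fin C)).card := Finset.card_le_univ _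
      _ = C := by simp
  have hkX := kr_le X
  have hkY := kr_le Y
  have hkH := kr_le H
  omega


/-- span of a set of columns of `Hb` -/
noncomputable def Wspan (Hb : Matrix (Fin K) (Fin C) ℝ) (S : Finset (Fin C)) :
    Submodule ℝ (Fin K → ℝ) := Submodule.span ℝ (col Hb '' ↑S)

/-- indices whose `Hb`-column lies in the span -/
noncomputable def Nset (Hb M : Matrix (Fin K) (Fin C) ℝ) (S : Finset (Fin C)) : Finset (Fin C) :=
  Finset.univ.filter (fun c => col M c ∈ Wspan Hb S)

lemma mem_Nset {Hb M : Matrix (Fin K) (Fin C) ℝ} {S : Finset (Fin C)} {c : Fin C} :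
    c ∈ Nset Hb M S ↔ col M c ∈ Wspan Hb S := by simp [Nset]

lemma subset_Nset (Hb : Matrix (Fin K) (Fin C) ℝ) (S : Finset (Fin C)) : S ⊆ Nset Hb Hb S := by
  intro c hc
  rw [mem_Nset]
  exact Submodule.subset_span ⟨c, by simpa using hc, rfl⟩

lemma Wspan_mono (Hb : Matrix (Fin K) (Fin C) ℝ) {S T : Finset (Fin C)} (h : S ⊆ T) :
    Wspan Hb S ≤ Wspan Hb T :=
  Submodule.span_mono (Set.image_mono (by exact_mod_cast h))

lemma finrank_Wspan_le (Hb : Matrix (Fin K) (Fin C) ℝ) (S : Finset (Fin C)) :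
    finrank ℝ (Wspan Hb S) ≤ S.card := by
  have : Wspan Hb S = Submodule.span ℝ ((S.image (col Hb) : Finset (Fin K → ℝ)) : Set (Fin K → ℝ)) := by
    rw [Wspan, Finset.coe_image]
  rw [this]
  calc finrank ℝ (Submodule.span ℝ ((S.image (col Hb) : Finset (Fin K → ℝ)) : Set (Fin K → ℝ)))
      ≤ (S.image (col Hb)).card := by
        simpa [Set.finrank] using finrank_span_finset_le_card (S.image (col Hb))
    _ ≤ S.card := Finset.card_image_le

/-- columns indexed by a small set are independent, from the null-vector form -/
lemma indep_cols (M : Matrix (Fin K) (Fin C) ℝ) (k : ℕ)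
    (hM : ∀ x, NullV M x → (supp x).card ≤ k → x = 0)
    (T : Finset (Fin C)) (hT : T.card ≤ k) :
    LinearIndependent ℝ (fun c : {c // c ∈ T} => col M (c : Fin C)) := by
  rw [Fintype.linearIndependent_iff]
  intro g hg
  set x : Fin C → ℝ := fun c => if h : c ∈ T then g ⟨c, h⟩ else 0 with hx
  have hnull : NullV M x := by
    intro r
    have e1 : ∑ c, x c * M r c = ∑ c ∈ T, x c * M r c := by
      rw [Finset.sum_subset (Finset.subset_univ T)]
      intro c _ hc
      simp [hx, hc]
    rw [e1, ← Finset.sum_coe_sort T (fun c => x c * M r c)]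
    have e2 : ∀ c : {c // c ∈ T}, x (c : Fin C) * M r (c : Fin C) = g c * M r (c : Fin C) := by
      intro c; simp [hx, c.2]
    rw [Finset.sum_congr rfl (fun c _ => e2 c)]
    have := congrFun hg r
    simpa [col] using this
  have hw : (supp x).card ≤ k := by
    refine le_trans (Finset.card_le_card ?_) hT
    intro c hc
    rw [mem_supp] at hc
    by_contra h
    simp [hx, h] at hc
  have hx0 := hM x hnull hw
  intro c
  have : x (c : Fin C) = 0 := by rw [hx0]; rfl
  simpa [hx, c.2] using this

/-- independent columns inside a submodule bound its finrank from below -/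
lemma card_le_finrank (M : Matrix (Fin K) (Fin C) ℝ) (k : ℕ)
    (hM : ∀ x, NullV M x → (supp x).card ≤ k → x = 0)
    (T : Finset (Fin C)) (hT : T.card ≤ k)
    (W : Submodule ℝ (Fin K → ℝ)) [FiniteDimensional ℝ W]
    (hmem : ∀ c ∈ T, col M c ∈ W) :
    T.card ≤ finrank ℝ W := by
  have hind := indep_cols M k hM T hT
  have hspan : Submodule.span ℝ (Set.range (fun c : {c // c ∈ T} => col M (c : Fin C))) ≤ W := by
    rw [Submodule.span_le]
    rintro v ⟨c, rfl⟩
    exact hmem c c.2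
  calc T.card = Fintype.card {c // c ∈ T} := (Fintype.card_coe T).symm
    _ = finrank ℝ (Submodule.span ℝ (Set.range (fun c : {c // c ∈ T} => col M (c : Fin C)))) :=
        (finrank_span_eq_card hind).symm
    _ ≤ finrank ℝ W := Submodule.finrank_mono hspan

/-- exact dimension of the span of at most `k` independent columns -/
lemma finrank_Wspan_eq (Hb : Matrix (Fin K) (Fin C) ℝ) (k : ℕ)
    (hHb : ∀ x, NullV Hb x → (supp x).card ≤ k → x = 0)
    (S : Finset (Fin C)) (hS : S.card ≤ k) :
    finrank ℝ (Wspan Hb S) = S.card := by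
  refine le_antisymm (finrank_Wspan_le Hb S) ?_
  exact card_le_finrank Hb k hHb S hS (Wspan Hb S)
    (fun c hc => Submodule.subset_span ⟨c, by simpa using hc, rfl⟩)

section PermLemma

variable (H Hb : Matrix (Fin K) (Fin C) ℝ) (k : ℕ)


/-- statement (F): counting consequence of condition (P) via a generic functional -/
lemma stmtF
    (hP : ∀ z : Fin K → ℝ, (supp (fun c => ∑ r, z r * Hb r c)).card + k ≤ C + 1 →
        (supp (fun c => ∑ r, z r * H r c)).card ≤ (supp (fun c => ∑ r, z r * Hb r c)).card)
    (S : Finset (Fin C)) (hn : k ≤ (Nset Hb Hb S).card + 1) :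
    (Nset Hb Hb S).card ≤ (Nset Hb H S).card := by
  set W := Wspan Hb S with hW
  set gs : Finset (Fin K → ℝ) :=
    ((Finset.univ \ Nset Hb Hb S).image (col Hb)) ∪ ((Finset.univ \ Nset Hb H S).image (col H))
    with hgs
  have hgsW : ∀ g ∈ gs, g ∉ W := by
    intro g hg
    rw [hgs, Finset.mem_union] at hg
    rcases hg with hg | hg
    · obtain ⟨c, hc, rfl⟩ := Finset.mem_image.mp hg
      rw [Finset.mem_sdiff] at hc
      exact fun hmem => hc.2 (mem_Nset.mpr hmem)
    · obtain ⟨c, hc, rfl⟩ := Finset.mem_image.mp hg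
      rw [Finset.mem_sdiff] at hc
      exact fun hmem => hc.2 (mem_Nset.mpr hmem)
  obtain ⟨z, hz0, hz⟩ := exists_generic W gs hgsW
  have hsuppb : supp (fun c => ∑ r, z r * Hb r c) = Finset.univ \ Nset Hb Hb S := by
    ext c
    rw [mem_supp, Finset.mem_sdiff]
    constructor
    · intro h
      refine ⟨Finset.mem_univ c, fun hc => h ?_⟩
      exact hz0 (col Hb c) (mem_Nset.mp hc)
    · rintro ⟨-, hc⟩
      apply hz
      rw [hgs, Finset.mem_union]
      exact Or.inl (Finset.mem_image.mpr ⟨c, Finset.mem_sdiff.mpr ⟨Finset.mem_univ c, hc⟩, rfl⟩)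
  have hsupp : supp (fun c => ∑ r, z r * H r c) = Finset.univ \ Nset Hb H S := by
    ext c
    rw [mem_supp, Finset.mem_sdiff]
    constructor
    · intro h
      refine ⟨Finset.mem_univ c, fun hc => h ?_⟩
      exact hz0 (col H c) (mem_Nset.mp hc)
    · rintro ⟨-, hc⟩
      apply hz
      rw [hgs, Finset.mem_union]
      exact Or.inr (Finset.mem_image.mpr ⟨c, Finset.mem_sdiff.mpr ⟨Finset.mem_univ c, hc⟩, rfl⟩)
  have hNbC : (Nset Hb Hb S).card ≤ C := by
    calc (Nset Hb Hb S).card ≤ (Finset.univ : Finset (Fin C)).card := Finset.card_le_univ _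
      _ = C := by simp
  have hMC : (Nset Hb H S).card ≤ C := by
    calc (Nset Hb H S).card ≤ (Finset.univ : Finset (Fin C)).card := Finset.card_le_univ _
      _ = C := by simp
  have hcard1 : (supp (fun c => ∑ r, z r * Hb r c)).card = C - (Nset Hb Hb S).card := by
    rw [hsuppb, Finset.card_sdiff_of_subset (Finset.subset_univ _)]
    simp
  have hcard2 : (supp (fun c => ∑ r, z r * H r c)).card = C - (Nset Hb H S).card := by
    rw [hsupp, Finset.card_sdiff_of_subset (Finset.subset_univ _)]
    simp
  have := hP z (by omega)
  omega

/-- Level k-1: the `Nset` of a (k-1)-set is itself, and exactly k-1 `H`-columns in its span. -/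
lemma levelBase
    (hk2 : 2 ≤ k)
    (hH : ∀ x, NullV H x → (supp x).card ≤ k → x = 0)
    (hP : ∀ z : Fin K → ℝ, (supp (fun c => ∑ r, z r * Hb r c)).card + k ≤ C + 1 →
        (supp (fun c => ∑ r, z r * H r c)).card ≤ (supp (fun c => ∑ r, z r * Hb r c)).card)
    (S : Finset (Fin C)) (hS : S.card + 1 = k) :
    Nset Hb Hb S = S ∧ (Nset Hb H S).card + 1 = k := by
  have hsub := subset_Nset Hb S
  have hn : k ≤ (Nset Hb Hb S).card + 1 := by
    have := Finset.card_le_card hsub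
    omega
  have hF := stmtF H Hb k hP S hn
  have hmle : (Nset Hb H S).card + 1 ≤ k := by
    by_contra hcon
    push_neg at hcon
    obtain ⟨T, hTsub, hTcard⟩ := Finset.exists_subset_card_eq (n := k) (by omega :
      k ≤ (Nset Hb H S).card)
    have hfr := card_le_finrank H k hH T (le_of_eq hTcard) (Wspan Hb S)
      (fun c hc => mem_Nset.mp (hTsub hc))
    have := finrank_Wspan_le Hb S
    omega
  have hNcard : (Nset Hb Hb S).card = S.card := by
    have := Finset.card_le_card hsub
    omega
  exact ⟨(Finset.eq_of_subset_of_card_le hsub (le_of_eq hNcard)).symm, by omega⟩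

/-- The Kruskal rank of `Hb` is also at least `k` (null-vector form). -/
lemma krHb
    (hk2 : 2 ≤ k) (hkC : k ≤ C)
    (hH : ∀ x, NullV H x → (supp x).card ≤ k → x = 0)
    (hP : ∀ z : Fin K → ℝ, (supp (fun c => ∑ r, z r * Hb r c)).card + k ≤ C + 1 →
        (supp (fun c => ∑ r, z r * H r c)).card ≤ (supp (fun c => ∑ r, z r * Hb r c)).card) :
    ∀ x, NullV Hb x → (supp x).card ≤ k → x = 0 := by
  intro x hnull hw
  by_contra hx
  have hsupp_ne : (supp x).Nonempty := by
    rcases Finset.eq_empty_or_nonempty (supp x) with h | h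
    · exfalso
      apply hx
      funext c
      by_contra hc
      have hmem : c ∈ supp x := mem_supp.mpr hc
      rw [h] at hmem
      exact absurd hmem (Finset.notMem_empty c)
    · exact h
  obtain ⟨cs, hcs⟩ := hsupp_ne
  have hxcs : x cs ≠ 0 := mem_supp.mp hcs
  have hmem : col Hb cs ∈ Wspan Hb (supp x \ {cs}) := by
    have hrel : col Hb cs = ∑ c ∈ supp x \ {cs}, (-(x c) / x cs) • col Hb c := by
      funext r
      rw [Finset.sum_apply]
      have h0 := hnull r
      have e1 : ∑ c ∈ supp x, x c * Hb r c = 0 := by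
        rw [Finset.sum_subset (Finset.subset_univ _) (fun c _ hc => by
          rw [not_mem_supp.mp hc, zero_mul])]
        exact h0
      have e2 : x cs * Hb r cs + ∑ c ∈ supp x \ {cs}, x c * Hb r c = 0 := by
        rw [Finset.sum_eq_sum_sdiff_singleton_add hcs (fun c => x c * Hb r c)] at e1
        linarith [e1]
      show Hb r cs = _
      have e4 : ∀ c ∈ supp x \ {cs}, ((-(x c) / x cs) • col Hb c) r
          = (-(x c) / x cs) * Hb r c := by
        intro c _; simp [col]
      rw [Finset.sum_congr rfl e4]
      apply mul_left_cancel₀ hxcs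
      rw [Finset.mul_sum]
      have e3 : ∀ c ∈ supp x \ {cs}, x cs * ((-(x c) / x cs) * Hb r c) = -(x c * Hb r c) := by
        intro c _; field_simp
      rw [Finset.sum_congr rfl e3, Finset.sum_neg_distrib]
      linarith [e2]
    rw [hrel]
    apply Submodule.sum_mem
    intro c hc
    apply Submodule.smul_mem
    exact Submodule.subset_span ⟨c, by simpa using hc, rfl⟩
  have hsmall : (supp x \ {cs}).card ≤ k - 1 := by
    have : (supp x \ {cs}).card = (supp x).card - 1 := by
      rw [Finset.card_sdiff_of_subset (by simpa using hcs)]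
      simp
    omega
  have hbig : k - 1 ≤ ((Finset.univ : Finset (Fin C)).erase cs).card := by
    rw [Finset.card_erase_of_mem (Finset.mem_univ cs)]
    simp only [Finset.card_univ, Fintype.card_fin]
    omega
  have hsub2 : supp x \ {cs} ⊆ (Finset.univ : Finset (Fin C)).erase cs := by
    intro c hc
    rw [Finset.mem_sdiff] at hc
    rw [Finset.mem_erase]
    exact ⟨by simpa using hc.2, Finset.mem_univ c⟩
  obtain ⟨T, hT1, hT2, hT3⟩ := Finset.exists_subsuperset_card_eq hsub2 hsmall hbig
  have hTk : T.card + 1 = k := by omega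
  have hbase := levelBase H Hb k hk2 hH hP T hTk
  have hcsN : cs ∈ Nset Hb Hb T := by
    rw [mem_Nset]
    exact Wspan_mono Hb hT1 hmem
  rw [hbase.1] at hcsN
  have := hT2 hcsN
  rw [Finset.mem_erase] at this
  exact this.1 rfl

/-- The descent step of Kruskal's permutation lemma. -/
lemma descend
    (hkC : k ≤ C)
    (hH : ∀ x, NullV H x → (supp x).card ≤ k → x = 0)
    (hHb : ∀ x, NullV Hb x → (supp x).card ≤ k → x = 0)
    (n : ℕ) (hn : n + 2 ≤ k)
    (hQ : ∀ S : Finset (Fin C), S.card = n + 1 → n + 1 ≤ (Nset Hb H S).card) :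
    ∀ S : Finset (Fin C), S.card = n → n ≤ (Nset Hb H S).card := by
  intro S hS
  by_contra hcon
  push_neg at hcon
  set M := Nset Hb H S with hM
  set p := M.card with hp
  -- each one-point extension contains exactly n+1 H-columns
  have hA : ∀ x ∈ Finset.univ \ S, (Nset Hb H (insert x S)).card = n + 1 := by
    intro x hx
    rw [Finset.mem_sdiff] at hx
    have hcardins : (insert x S).card = n + 1 := by
      rw [Finset.card_insert_of_notMem hx.2, hS]
    refine le_antisymm ?_ (hQ _ hcardins)
    by_contra hge
    push_neg at hge
    obtain ⟨T, hTsub, hTcard⟩ := Finset.exists_subset_card_eq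
      (s := Nset Hb H (insert x S)) (n := n + 2) (by omega)
    have hfr := card_le_finrank H k hH T (by omega) (Wspan Hb (insert x S))
      (fun c hc => mem_Nset.mp (hTsub hc))
    have hle := finrank_Wspan_le Hb (insert x S)
    omega
  -- intersections of extensions give back S
  have hWinf : ∀ x ∈ Finset.univ \ S, ∀ y ∈ Finset.univ \ S, x ≠ y →
      Wspan Hb (insert x S) ⊓ Wspan Hb (insert y S) = Wspan Hb S := by
    intro x hx y hy hxy
    rw [Finset.mem_sdiff] at hx hy
    have hcx : (insert x S).card = n + 1 := by rw [Finset.card_insert_of_notMem hx.2, hS]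
    have hcy : (insert y S).card = n + 1 := by rw [Finset.card_insert_of_notMem hy.2, hS]
    have hcxy : (insert x (insert y S)).card = n + 2 := by
      rw [Finset.card_insert_of_notMem (by
        intro hmem
        rcases Finset.mem_insert.mp hmem with h | h
        · exact hxy h
        · exact hx.2 h), hcy]
    have hfrx : finrank ℝ (Wspan Hb (insert x S)) = n + 1 :=
      (finrank_Wspan_eq Hb k hHb _ (by omega)).trans (by rw [hcx])
    have hfry : finrank ℝ (Wspan Hb (insert y S)) = n + 1 :=
      (finrank_Wspan_eq Hb k hHb _ (by omega)).trans (by rw [hcy])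
    have hfrS : finrank ℝ (Wspan Hb S) = n :=
      (finrank_Wspan_eq Hb k hHb _ (by omega)).trans (by rw [hS])
    have hunion : insert x S ∪ insert y S = insert x (insert y S) := by
      ext c
      simp only [Finset.mem_union, Finset.mem_insert]
      tauto
    have hWun : ∀ (S' T' : Finset (Fin C)), Wspan Hb (S' ∪ T') = Wspan Hb S' ⊔ Wspan Hb T' := by
      intro S' T'
      unfold Wspan
      rw [Finset.coe_union, Set.image_union, Submodule.span_union]
    have hsup : Wspan Hb (insert x S) ⊔ Wspan Hb (insert y S)
        = Wspan Hb (insert x (insert y S)) := by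
      rw [← hunion, hWun]
    have hfrsup : finrank ℝ ↥(Wspan Hb (insert x S) ⊔ Wspan Hb (insert y S)) = n + 2 := by
      rw [hsup]
      exact (finrank_Wspan_eq Hb k hHb _ (by omega)).trans (by rw [hcxy])
    have hkey := Submodule.finrank_sup_add_finrank_inf_eq
      (Wspan Hb (insert x S)) (Wspan Hb (insert y S))
    have hle : Wspan Hb S ≤ Wspan Hb (insert x S) ⊓ Wspan Hb (insert y S) :=
      le_inf (Wspan_mono Hb (Finset.subset_insert x S)) (Wspan_mono Hb (Finset.subset_insert y S))
    have hfrinf : finrank ℝ ↥(Wspan Hb (insert x S) ⊓ Wspan Hb (insert y S)) ≤ n := by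
      omega
    exact (Submodule.eq_of_le_of_finrank_le hle (by omega)).symm
  have hAint : ∀ x ∈ Finset.univ \ S, ∀ y ∈ Finset.univ \ S, x ≠ y →
      Nset Hb H (insert x S) ∩ Nset Hb H (insert y S) = M := by
    intro x hx y hy hxy
    ext c
    rw [Finset.mem_inter, mem_Nset, mem_Nset, hM, mem_Nset]
    rw [← Submodule.mem_inf, hWinf x hx y hy hxy]
  -- M is contained in each extension set
  have hMsub : ∀ x, M ⊆ Nset Hb H (insert x S) := by
    intro x c hc
    rw [hM, mem_Nset] at hc
    rw [mem_Nset]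
    exact Wspan_mono Hb (Finset.subset_insert x S) hc
  -- counting
  set f : Fin C → Finset (Fin C) := fun x => Nset Hb H (insert x S) \ M with hf
  have hdisj : ∀ x ∈ Finset.univ \ S, ∀ y ∈ Finset.univ \ S, x ≠ y → Disjoint (f x) (f y) := by
    intro x hx y hy hxy
    rw [Finset.disjoint_left]
    intro c hcx hcy
    rw [hf] at hcx hcy
    simp only [Finset.mem_sdiff] at hcx hcy
    have : c ∈ Nset Hb H (insert x S) ∩ Nset Hb H (insert y S) :=
      Finset.mem_inter.mpr ⟨hcx.1, hcy.1⟩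
    rw [hAint x hx y hy hxy] at this
    exact hcx.2 this
  have hfcard : ∀ x ∈ Finset.univ \ S, (f x).card = n + 1 - p := by
    intro x hx
    rw [hf]
    simp only
    rw [Finset.card_sdiff_of_subset (hMsub x), hA x hx]
  have hbiU := Finset.card_biUnion hdisj
  have hsum : ∑ x ∈ Finset.univ \ S, (f x).card = (C - n) * (n + 1 - p) := by
    rw [Finset.sum_congr rfl hfcard, Finset.sum_const, smul_eq_mul]
    congr 1
    rw [Finset.card_sdiff_of_subset (Finset.subset_univ S), hS]
    simp
  have hdisjM : Disjoint ((Finset.univ \ S).biUnion f) M := by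
    rw [Finset.disjoint_left]
    intro c hc hcM
    obtain ⟨x, _, hcx⟩ := Finset.mem_biUnion.mp hc
    rw [hf] at hcx
    simp only [Finset.mem_sdiff] at hcx
    exact hcx.2 hcM
  have htotal : ((Finset.univ \ S).biUnion f).card + M.card ≤ C := by
    rw [← Finset.card_union_of_disjoint hdisjM]
    calc (((Finset.univ \ S).biUnion f) ∪ M).card
        ≤ (Finset.univ : Finset (Fin C)).card := Finset.card_le_univ _
      _ = C := by simp
  rw [hbiU, hsum] at htotal
  -- arithmetic contradiction
  have hnC : n ≤ C := by omega
  set t := C - n with ht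
  set q := n + 1 - p with hq
  have ht2 : 2 ≤ t := by omega
  have hq2 : 2 ≤ q := by omega
  have hCtn : C = t + n := by omega
  have hnpq : n + 1 = p + q := by omega
  have hkey2 : t + q ≤ t * q := by nlinarith
  have : t * q + p ≤ C := htotal
  set m := t * q with hm
  omega

/-- All levels from k-1 down to 1. -/
lemma Qall
    (hk2 : 2 ≤ k) (hkC : k ≤ C)
    (hH : ∀ x, NullV H x → (supp x).card ≤ k → x = 0)
    (hP : ∀ z : Fin K → ℝ, (supp (fun c => ∑ r, z r * Hb r c)).card + k ≤ C + 1 →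
        (supp (fun c => ∑ r, z r * H r c)).card ≤ (supp (fun c => ∑ r, z r * Hb r c)).card) :
    ∀ d n, n + 1 + d = k → ∀ S : Finset (Fin C), S.card = n → n ≤ (Nset Hb H S).card := by
  have hHb := krHb H Hb k hk2 hkC hH hP
  intro d
  induction d with
  | zero =>
    intro n hn S hScard
    have := (levelBase H Hb k hk2 hH hP S (by omega)).2
    omega
  | succ d ih =>
    intro n hn S hScard
    have hdesc := descend H Hb k hkC hH hHb n (by omega)
      (fun S' hS' => ih (n + 1) (by omega) S' hS')
    exact hdesc S hScard

/-- Kruskal's permutation lemma. -/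
lemma perm_lemma
    (hk2 : 2 ≤ k) (hkC : k ≤ C)
    (hH : ∀ x, NullV H x → (supp x).card ≤ k → x = 0)
    (hP : ∀ z : Fin K → ℝ, (supp (fun c => ∑ r, z r * Hb r c)).card + k ≤ C + 1 →
        (supp (fun c => ∑ r, z r * H r c)).card ≤ (supp (fun c => ∑ r, z r * Hb r c)).card) :
    ∃ (σ : Equiv.Perm (Fin C)) (μ : Fin C → ℝ), (∀ c, μ c ≠ 0) ∧
      ∀ r c, Hb r c = μ c * H r (σ c) := by
  have hHb := krHb H Hb k hk2 hkC hH hP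
  have hQ1 := Qall H Hb k hk2 hkC hH hP (k - 1 - 1) 1 (by omega)
  -- for each c0 there are c1 and nonzero t with col Hb c0 = t • col H c1
  have hmatch : ∀ c0 : Fin C, ∃ (c1 : Fin C) (t : ℝ), t ≠ 0 ∧ ∀ r, Hb r c0 = t * H r c1 := by
    intro c0
    have h1 := hQ1 {c0} (Finset.card_singleton c0)
    have hne : (Nset Hb H {c0}).Nonempty := Finset.card_pos.mp (by omega)
    obtain ⟨c1, hc1⟩ := hne
    rw [mem_Nset] at hc1
    have hsingle : Wspan Hb {c0} = Submodule.span ℝ {col Hb c0} := by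
      rw [Wspan, Finset.coe_singleton, Set.image_singleton]
    rw [hsingle, Submodule.mem_span_singleton] at hc1
    obtain ⟨s, hs⟩ := hc1
    -- col H c1 ≠ 0
    have hHc1 : col H c1 ≠ 0 := by
      intro h0
      have hnull : NullV H (Pi.single c1 1) := by
        intro r
        rw [Finset.sum_eq_single c1]
        · have := congrFun h0 r
          simp only [col, Pi.zero_apply] at this
          simp [this]
        · intro b _ hb; simp [Pi.single_eq_of_ne hb]
        · simp
      have hwt : (supp (Pi.single c1 (1:ℝ))).card ≤ k := by
        have hsub : supp (Pi.single c1 (1:ℝ)) ⊆ {c1} := by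
          intro b hb
          rw [mem_supp] at hb
          by_contra hbc
          simp only [Finset.mem_singleton] at hbc
          exact hb (Pi.single_eq_of_ne hbc 1)
        have := Finset.card_le_card hsub
        simp only [Finset.card_singleton] at this
        omega
      have := congrFun (hH _ hnull hwt) c1
      simp at this
    have hs0 : s ≠ 0 := by
      intro h
      rw [h, zero_smul] at hs
      exact hHc1 hs.symm
    refine ⟨c1, s⁻¹, inv_ne_zero hs0, fun r => ?_⟩
    have := congrFun hs r
    simp only [Pi.smul_apply, smul_eq_mul, col] at this
    field_simp
    linarith [this]
  choose g t ht0 hteq using hmatch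
  -- g is injective
  have hginj : Function.Injective g := by
    intro c0 c0' hgeq
    by_contra hne
    set x : Fin C → ℝ := fun c => if c = c0 then t c0' else if c = c0' then -(t c0) else 0 with hx
    have hnull : NullV Hb x := by
      intro r
      have hsplit : ∀ c, x c * Hb r c
          = (if c = c0 then t c0' * Hb r c0 else 0)
            + (if c = c0' then -(t c0) * Hb r c0' else 0) := by
        intro c
        by_cases h0 : c = c0
        · subst h0
          simp [hx, hne]
        · by_cases h1 : c = c0'
          · subst h1
            simp [hx, h0]
          · simp [hx, h0, h1]
      rw [Finset.sum_congr rfl (fun c _ => hsplit c), Finset.sum_add_distrib,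
        Finset.sum_ite_eq' Finset.univ c0, Finset.sum_ite_eq' Finset.univ c0']
      simp only [Finset.mem_univ, if_true]
      rw [hteq c0 r, hteq c0' r, hgeq]
      ring
    have hwt : (supp x).card ≤ k := by
      have hsub : supp x ⊆ {c0, c0'} := by
        intro c hc
        rw [mem_supp] at hc
        rw [hx] at hc
        by_cases h0 : c = c0
        · simp [h0]
        · by_cases h1 : c = c0'
          · simp [h1]
          · simp [h0, h1] at hc
      have h2 := Finset.card_le_card hsub
      have h3 : ({c0, c0'} : Finset (Fin C)).card ≤ 2 := Finset.card_le_two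
      omega
    have := congrFun (hHb x hnull hwt) c0
    rw [hx] at this
    simp only [if_pos rfl, Pi.zero_apply] at this
    exact ht0 c0' this
  have hgbij : Function.Bijective g := Finite.injective_iff_bijective.mp hginj
  exact ⟨Equiv.ofBijective g hgbij, t, ht0, fun r c => by
    rw [hteq c r]; rfl⟩

end PermLemma



section Assembly

/-- a column outside `S` is not in the span of the `S`-columns, below the Kruskal rank -/
lemma col_notin_span (M : Matrix (Fin K) (Fin C) ℝ) (k : ℕ)
    (hM : ∀ x, NullV M x → (supp x).card ≤ k → x = 0)
    (S : Finset (Fin C)) (hcard : S.card + 1 ≤ k) {c : Fin C} (hc : c ∉ S) :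
    col M c ∉ Wspan M S := by
  have hT : (insert c S).card ≤ k := by
    rw [Finset.card_insert_of_notMem hc]
    omega
  have hind := indep_cols M k hM (insert c S) hT
  have hcmem : c ∈ insert c S := Finset.mem_insert_self c S
  set cc : {x // x ∈ insert c S} := ⟨c, hcmem⟩ with hcc
  have hnot : cc ∉ {x : {x // x ∈ insert c S} | (x : Fin C) ∈ S} := by
    intro h
    exact hc h
  have := hind.notMem_span_image (s := {x : {x // x ∈ insert c S} | (x : Fin C) ∈ S}) hnot
  intro hmem
  apply this
  have himg : (fun (x : {x // x ∈ insert c S}) => col M (x : Fin C)) ''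
      {x : {x // x ∈ insert c S} | (x : Fin C) ∈ S} = col M '' ↑S := by
    ext v
    constructor
    · rintro ⟨x, hx, rfl⟩
      exact ⟨x, hx, rfl⟩
    · rintro ⟨x, hx, rfl⟩
      exact ⟨⟨x, Finset.mem_insert_of_mem (by exact_mod_cast hx)⟩, by exact_mod_cast hx, rfl⟩
  rw [himg]
  exact hmem

/-- no two distinct columns are proportional when the Kruskal rank is at least 2 -/
lemma not_prop_cols (M : Matrix (Fin K) (Fin C) ℝ) (k : ℕ)
    (hM : ∀ x, NullV M x → (supp x).card ≤ k → x = 0) (hk2 : 2 ≤ k)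
    {c c' : Fin C} (hne : c' ≠ c) (s : ℝ) (hprop : ∀ r, M r c' = s * M r c) : False := by
  set x : Fin C → ℝ := fun d => if d = c' then 1 else if d = c then -s else 0 with hx
  have hnull : NullV M x := by
    intro r
    have hsplit : ∀ d, x d * M r d
        = (if d = c' then M r c' else 0) + (if d = c then -s * M r c else 0) := by
      intro d
      by_cases h0 : d = c'
      · subst h0
        simp [hx, hne]
      · by_cases h1 : d = c
        · subst h1
          simp [hx, h0]
        · simp [hx, h0, h1]
    rw [Finset.sum_congr rfl (fun d _ => hsplit d), Finset.sum_add_distrib,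
      Finset.sum_ite_eq' Finset.univ c', Finset.sum_ite_eq' Finset.univ c]
    simp only [Finset.mem_univ, if_true]
    rw [hprop r]
    ring
  have hwt : (supp x).card ≤ k := by
    have hsub : supp x ⊆ {c', c} := by
      intro d hd
      rw [mem_supp] at hd
      by_cases h0 : d = c'
      · simp [h0]
      · by_cases h1 : d = c
        · simp [h1]
        · simp [hx, h0, h1] at hd
    have h2 := Finset.card_le_card hsub
    have h3 : ({c', c} : Finset (Fin C)).card ≤ 2 := Finset.card_le_two
    omega
  have := congrFun (hM x hnull hwt) c'
  rw [hx] at this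
  simp only [if_pos rfl, Pi.zero_apply] at this
  exact one_ne_zero this

/-- Khatri-Rao independence: under `C + 2 ≤ k_A + k_B` the columnwise products
of `A` and `B` are linearly independent (implication form). -/
lemma indepKR (A : Matrix (Fin I) (Fin C) ℝ) (B : Matrix (Fin J) (Fin C) ℝ)
    (hAB : C + 2 ≤ kruskalRank A + kruskalRank B)
    (x : Fin C → ℝ) (hx : ∀ i j, ∑ c, x c * A i c * B j c = 0) : x = 0 := by
  have hzero : (Matrix.of fun i j => ∑ c, x c * B j c * A i c)
      = (0 : Matrix (Fin I) (Fin J) ℝ) := by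
    ext i j
    simp only [Matrix.of_apply, Matrix.zero_apply]
    rw [← hx i j]
    apply Finset.sum_congr rfl
    intro c _
    ring
  have hphi : phiMap A B x = 0 := by
    rw [phiMap, hzero, Matrix.mulVecLin_zero]
  have hlow := rank_lower A B x
  rw [hphi, LinearMap.range_zero] at hlow
  have hfb : finrank ℝ (⊥ : Submodule ℝ (Fin I → ℝ)) = 0 := finrank_bot ℝ _
  rw [hfb] at hlow
  have hxC : (supp x).card ≤ C := by
    calc (supp x).card ≤ (Finset.univ : Finset (Fin C)).card := Finset.card_le_univ _
      _ = C := by simp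
  have hkA := kr_le A
  have hkB := kr_le B
  have hw0 : (supp x).card = 0 := by omega
  funext c
  by_contra hc
  have : c ∈ supp x := mem_supp.mpr hc
  have := Finset.card_pos.mpr ⟨c, this⟩
  omega

/-- double contraction of a triple sum -/
lemma contract (X : Matrix (Fin I) (Fin C) ℝ) (Y : Matrix (Fin J) (Fin C) ℝ)
    (H : Matrix (Fin K) (Fin C) ℝ) (u : Fin I → ℝ) (v : Fin J → ℝ) (r : Fin K) :
    ∑ c, (∑ i, u i * X i c) * (∑ j, v j * Y j c) * H r c
      = ∑ i, ∑ j, u i * v j * (∑ c, X i c * Y j c * H r c) := by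
  calc ∑ c, (∑ i, u i * X i c) * (∑ j, v j * Y j c) * H r c
      = ∑ c, ∑ i, ∑ j, (u i * X i c) * (v j * Y j c) * H r c := by
        apply Finset.sum_congr rfl; intro c _
        rw [Finset.sum_mul_sum, Finset.sum_mul]
        apply Finset.sum_congr rfl; intro i _
        rw [Finset.sum_mul]
    _ = ∑ i, ∑ c, ∑ j, (u i * X i c) * (v j * Y j c) * H r c := Finset.sum_comm
    _ = ∑ i, ∑ j, ∑ c, (u i * X i c) * (v j * Y j c) * H r c := by
        apply Finset.sum_congr rfl; intro i _
        exact Finset.sum_comm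
    _ = ∑ i, ∑ j, u i * v j * (∑ c, X i c * Y j c * H r c) := by
        apply Finset.sum_congr rfl; intro i _
        apply Finset.sum_congr rfl; intro j _
        rw [Finset.mul_sum]
        apply Finset.sum_congr rfl; intro c _
        ring

lemma sum_single {n : ℕ} (M : Matrix (Fin n) (Fin C) ℝ) (i : Fin n) (c : Fin C) :
    (∑ i', (Pi.single i 1 : Fin n → ℝ) i' * M i' c) = M i c := by
  rw [Finset.sum_eq_single i]
  · simp
  · intro b _ hb
    simp [Pi.single_eq_of_ne hb]
  · simp

end Assembly


/-- Kruskal's theorem, main form. -/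
lemma main {I J K C : ℕ} (hC : 1 ≤ C)
    (A Abar : Matrix (Fin I) (Fin C) ℝ)
    (B Bbar : Matrix (Fin J) (Fin C) ℝ)
    (D Dbar : Matrix (Fin K) (Fin C) ℝ)
    (heq : ∀ i j k, ∑ c, A i c * B j c * D k c = ∑ c, Abar i c * Bbar j c * Dbar k c)
    (hk : kruskalRank A + kruskalRank B + kruskalRank D ≥ 2 * C + 2) :
    ∃ (σ : Equiv.Perm (Fin C)) (a b d : Fin C → ℝ),
      (∀ c, a c ≠ 0 ∧ b c ≠ 0 ∧ d c ≠ 0 ∧ a c * b c * d c = 1) ∧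
      (∀ i c, Abar i c = a c * A i (σ c)) ∧
      (∀ j c, Bbar j c = b c * B j (σ c)) ∧
      (∀ k c, Dbar k c = d c * D k (σ c)) := by
  classical
  have hkA := kr_le A
  have hkB := kr_le B
  have hkD := kr_le D
  have hA2 : 2 ≤ kruskalRank A := by omega
  have hB2 : 2 ≤ kruskalRank B := by omega
  have hD2 : 2 ≤ kruskalRank D := by omega
  have hAB : C + 2 ≤ kruskalRank A + kruskalRank B := by omega
  have hAD : C + 2 ≤ kruskalRank A + kruskalRank D := by omega
  have hBD : C + 2 ≤ kruskalRank B + kruskalRank D := by omega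
  have heqA : ∀ j r i, ∑ c, B j c * D r c * A i c = ∑ c, Bbar j c * Dbar r c * Abar i c := by
    intro j r i
    calc ∑ c, B j c * D r c * A i c = ∑ c, A i c * B j c * D r c := by
          apply Finset.sum_congr rfl; intro c _; ring
      _ = ∑ c, Abar i c * Bbar j c * Dbar r c := heq i j r
      _ = ∑ c, Bbar j c * Dbar r c * Abar i c := by
          apply Finset.sum_congr rfl; intro c _; ring
  have heqB : ∀ r i j, ∑ c, D r c * A i c * B j c = ∑ c, Dbar r c * Abar i c * Bbar j c := by
    intro r i j
    calc ∑ c, D r c * A i c * B j c = ∑ c, A i c * B j c * D r c := by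
          apply Finset.sum_congr rfl; intro c _; ring
      _ = ∑ c, Abar i c * Bbar j c * Dbar r c := heq i j r
      _ = ∑ c, Dbar r c * Abar i c * Bbar j c := by
          apply Finset.sum_congr rfl; intro c _; ring
  obtain ⟨σD, dd, hdd0, hdd⟩ := perm_lemma D Dbar (kruskalRank D) hD2 hkD
    (fun x hx hw => kr_null D x hx hw)
    (fun z hz => stepP A Abar B Bbar D Dbar heq hAD hBD (by omega) z hz)
  obtain ⟨σA, aa, haa0, haa⟩ := perm_lemma A Abar (kruskalRank A) hA2 hkA
    (fun x hx hw => kr_null A x hx hw)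
    (fun z hz => stepP B Bbar D Dbar A Abar heqA (by omega) (by omega) (by omega) z hz)
  obtain ⟨σB, bb, hbb0, hbb⟩ := perm_lemma B Bbar (kruskalRank B) hB2 hkB
    (fun x hx hw => kr_null B x hx hw)
    (fun z hz => stepP D Dbar A Abar B Bbar heqB (by omega) (by omega) (by omega) z hz)
  set τ : Equiv.Perm (Fin C) := σD.symm.trans σA with hτdef
  set ρ : Equiv.Perm (Fin C) := σD.symm.trans σB with hρdef
  set θ : Fin C → ℝ := fun c => aa (σD.symm c) * bb (σD.symm c) * dd (σD.symm c) with hθdef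
  have hθ0 : ∀ c, θ c ≠ 0 := fun c => mul_ne_zero (mul_ne_zero (haa0 _) (hbb0 _)) (hdd0 _)
  have hτσ : ∀ c, τ (σD c) = σA c := fun c => by simp [hτdef]
  have hρσ : ∀ c, ρ (σD c) = σB c := fun c => by simp [hρdef]
  have hθσ : ∀ c, θ (σD c) = aa c * bb c * dd c := fun c => by simp [hθdef]
  have keyId : ∀ (u : Fin I → ℝ) (v : Fin J → ℝ) (r : Fin K),
      ∑ c, ((∑ i, u i * A i c) * (∑ j, v j * B j c)
        - θ c * ((∑ i, u i * A i (τ c)) * (∑ j, v j * B j (ρ c)))) * D r c = 0 := by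
    intro u v r
    have h1 : ∑ c, (∑ i, u i * A i c) * (∑ j, v j * B j c) * D r c
        = ∑ c, (∑ i, u i * Abar i c) * (∑ j, v j * Bbar j c) * Dbar r c := by
      rw [contract A B D u v r, contract Abar Bbar Dbar u v r]
      apply Finset.sum_congr rfl; intro i _
      apply Finset.sum_congr rfl; intro j _
      rw [heq i j r]
    have h2 : ∑ c, (∑ i, u i * Abar i c) * (∑ j, v j * Bbar j c) * Dbar r c
        = ∑ c, θ c * ((∑ i, u i * A i (τ c)) * (∑ j, v j * B j (ρ c))) * D r c := by
      have hsummand : ∀ c, (∑ i, u i * Abar i c) * (∑ j, v j * Bbar j c) * Dbar r c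
          = θ (σD c) * ((∑ i, u i * A i (τ (σD c))) * (∑ j, v j * B j (ρ (σD c))))
            * D r (σD c) := by
        intro c
        have e1 : ∑ i, u i * Abar i c = aa c * ∑ i, u i * A i (σA c) := by
          rw [Finset.mul_sum]
          apply Finset.sum_congr rfl; intro i _
          rw [haa i c]; ring
        have e2 : ∑ j, v j * Bbar j c = bb c * ∑ j, v j * B j (σB c) := by
          rw [Finset.mul_sum]
          apply Finset.sum_congr rfl; intro j _
          rw [hbb j c]; ring
        rw [e1, e2, hdd r c, hτσ c, hρσ c, hθσ c]
        ring
      rw [Finset.sum_congr rfl (fun c _ => hsummand c)]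
      exact Equiv.sum_comp σD
        (fun c => θ c * ((∑ i, u i * A i (τ c)) * (∑ j, v j * B j (ρ c))) * D r c)
    have hexp : ∀ c, ((∑ i, u i * A i c) * (∑ j, v j * B j c)
          - θ c * ((∑ i, u i * A i (τ c)) * (∑ j, v j * B j (ρ c)))) * D r c
        = (∑ i, u i * A i c) * (∑ j, v j * B j c) * D r c
          - θ c * ((∑ i, u i * A i (τ c)) * (∑ j, v j * B j (ρ c))) * D r c := by
      intro c; ring
    rw [Finset.sum_congr rfl (fun c _ => hexp c), Finset.sum_sub_distrib, h1, h2, sub_self]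
  by_cases hcase : ∀ c, τ c = ρ c
  · -- aligned case
    have hptIJ : ∀ (i : Fin I) (j : Fin J) (r : Fin K),
        ∑ c, A i c * B j c * D r c = ∑ c, θ c * (A i (τ c) * B j (ρ c)) * D r c := by
      intro i j r
      have hk1 := keyId (Pi.single i 1) (Pi.single j 1) r
      simp only [sum_single] at hk1
      have hexp : ∀ c, (A i c * B j c - θ c * (A i (τ c) * B j (ρ c))) * D r c
          = A i c * B j c * D r c - θ c * (A i (τ c) * B j (ρ c)) * D r c := by
        intro c; ring
      rw [Finset.sum_congr rfl (fun c _ => hexp c), Finset.sum_sub_distrib,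
        sub_eq_zero] at hk1
      exact hk1
    have hpt : ∀ (r : Fin K) (c : Fin C), D r c = θ (τ.symm c) * D r (τ.symm c) := by
      intro r
      set x : Fin C → ℝ := fun c => D r c - θ (τ.symm c) * D r (τ.symm c) with hx
      have hxnull : ∀ i j, ∑ c, x c * A i c * B j c = 0 := by
        intro i j
        have hsub : ∀ c, x c * A i c * B j c
            = D r c * (A i c * B j c)
              - θ (τ.symm c) * D r (τ.symm c) * (A i c * B j c) := by
          intro c; rw [hx]; ring
        rw [Finset.sum_congr rfl (fun c _ => hsub c), Finset.sum_sub_distrib]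
        have hre : ∑ c, θ (τ.symm c) * D r (τ.symm c) * (A i c * B j c)
            = ∑ c, θ c * D r c * (A i (τ c) * B j (τ c)) := by
          rw [← Equiv.sum_comp τ
            (fun c => θ (τ.symm c) * D r (τ.symm c) * (A i c * B j c))]
          apply Finset.sum_congr rfl; intro c _
          rw [Equiv.symm_apply_apply]
        rw [hre]
        have h2 := hptIJ i j r
        have h3 : ∑ c, θ c * (A i (τ c) * B j (ρ c)) * D r c
            = ∑ c, θ c * D r c * (A i (τ c) * B j (τ c)) := by
          apply Finset.sum_congr rfl; intro c _
          rw [← hcase c]; ring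
        have h4 : ∑ c, D r c * (A i c * B j c) = ∑ c, A i c * B j c * D r c := by
          apply Finset.sum_congr rfl; intro c _; ring
        rw [h4, h2, h3, sub_self]
      have := indepKR A B hAB x hxnull
      intro c
      have hc := congrFun this c
      rw [hx] at hc
      simp only [Pi.zero_apply] at hc
      linarith [hc]
    have hτid : ∀ c, τ c = c := by
      by_contra hcon
      push_neg at hcon
      obtain ⟨c, hc⟩ := hcon
      have h1 : τ.symm (τ c) = c := Equiv.symm_apply_apply τ c
      have hne : τ c ≠ c := hc
      refine not_prop_cols D (kruskalRank D) (fun x hx hw => kr_null D x hx hw) hD2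
        (c' := τ c) (c := c) hne (θ c) ?_
      intro r
      have := hpt r (τ c)
      rwa [h1] at this
    have hρid : ∀ c, ρ c = c := fun c => (hcase c).symm.trans (hτid c)
    have hθ1 : ∀ c, θ c = 1 := by
      intro c
      have hτsymm : τ.symm c = c := by
        have h := hτid (τ.symm c)
        rw [Equiv.apply_symm_apply] at h
        exact h.symm
      have h2 : ∀ r, D r c = θ c * D r c := by
        intro r
        have := hpt r c
        rwa [hτsymm] at this
      have hcol : col D c ≠ 0 := col_ne_zero D (by omega) c
      obtain ⟨r, hr⟩ := Function.ne_iff.mp hcol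
      simp only [col, Pi.zero_apply] at hr
      have h3 : (θ c - 1) * D r c = 0 := by
        rw [sub_mul, one_mul]
        linarith [h2 r]
      rcases mul_eq_zero.mp h3 with h | h
      · linarith
      · exact absurd h hr
    have hAeqD : ∀ c, σA c = σD c := by
      intro c
      have := hτid (σD c)
      rw [hτσ c] at this
      exact this
    have hBeqD : ∀ c, σB c = σD c := by
      intro c
      have := hρid (σD c)
      rw [hρσ c] at this
      exact this
    have hprod : ∀ c, aa c * bb c * dd c = 1 := by
      intro c
      have := hθ1 (σD c)
      rwa [hθσ c] at this
    refine ⟨σD, aa, bb, dd, fun c => ⟨haa0 c, hbb0 c, hdd0 c, hprod c⟩,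
      fun i c => ?_, fun j c => ?_, fun r c => hdd r c⟩
    · rw [haa i c, hAeqD c]
    · rw [hbb j c, hBeqD c]
  · -- misaligned case: contradiction
    exfalso
    push_neg at hcase
    obtain ⟨c0, hc0⟩ := hcase
    have hxy : τ c0 ≠ ρ c0 := hc0
    have hcard2 : ({τ c0, ρ c0} : Finset (Fin C)).card = 2 := Finset.card_pair hxy
    have hCkB : C - kruskalRank B
        ≤ (Finset.univ \ ({τ c0, ρ c0} : Finset (Fin C))).card := by
      rw [Finset.card_sdiff_of_subset (Finset.subset_univ _), hcard2]
      simp only [Finset.card_univ, Fintype.card_fin]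
      omega
    obtain ⟨P, hPsub, hPcard⟩ := Finset.exists_subset_card_eq hCkB
    set E : Finset (Fin C) := insert (ρ c0) P with hE
    have hρP : ρ c0 ∉ P := by
      intro h
      have := hPsub h
      rw [Finset.mem_sdiff] at this
      exact this.2 (by simp)
    have hEcard : E.card = C - kruskalRank B + 1 := by
      rw [hE, Finset.card_insert_of_notMem hρP, hPcard]
    have hxxE : τ c0 ∉ E := by
      intro h
      rcases Finset.mem_insert.mp h with h | h
      · exact hxy h
      · have := hPsub h
        rw [Finset.mem_sdiff] at this
        exact this.2 (by simp)
    have hyE : ρ c0 ∈ E := Finset.mem_insert_self _ _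
    have hEk : E.card + 1 ≤ kruskalRank A := by omega
    obtain ⟨u, hu0, hu⟩ := exists_generic (Wspan A E) ((Finset.univ \ E).image (col A))
      (by
        intro g hg
        obtain ⟨c, hc, rfl⟩ := Finset.mem_image.mp hg
        rw [Finset.mem_sdiff] at hc
        exact col_notin_span A (kruskalRank A) (fun x hx hw => kr_null A x hx hw) E hEk hc.2)
    have hu0' : ∀ c ∈ E, ∑ i, u i * A i c = 0 := fun c hc =>
      hu0 (col A c) (Submodule.subset_span ⟨c, by simpa using hc, rfl⟩)
    have hu' : ∀ c, c ∉ E → (∑ i, u i * A i c) ≠ 0 := fun c hc =>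
      hu (col A c) (Finset.mem_image.mpr ⟨c, Finset.mem_sdiff.mpr ⟨Finset.mem_univ c, hc⟩, rfl⟩)
    set E' : Finset (Fin C) := Finset.univ \ E with hE'
    have hE'card : E'.card = kruskalRank B - 1 := by
      rw [hE', Finset.card_sdiff_of_subset (Finset.subset_univ _), hEcard]
      simp only [Finset.card_univ, Fintype.card_fin]
      omega
    have hE'k : E'.card + 1 ≤ kruskalRank B := by omega
    obtain ⟨v, hv0, hv⟩ := exists_generic (Wspan B E') ((Finset.univ \ E').image (col B))
      (by
        intro g hg
        obtain ⟨c, hc, rfl⟩ := Finset.mem_image.mp hg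
        rw [Finset.mem_sdiff] at hc
        exact col_notin_span B (kruskalRank B) (fun x hx hw => kr_null B x hx hw) E' hE'k hc.2)
    have hv0' : ∀ c ∈ E', ∑ j, v j * B j c = 0 := fun c hc =>
      hv0 (col B c) (Submodule.subset_span ⟨c, by simpa using hc, rfl⟩)
    have hv' : ∀ c, c ∉ E' → (∑ j, v j * B j c) ≠ 0 := fun c hc =>
      hv (col B c) (Finset.mem_image.mpr ⟨c, Finset.mem_sdiff.mpr ⟨Finset.mem_univ c, hc⟩, rfl⟩)
    set ξ : Fin C → ℝ := fun c => (∑ i, u i * A i c) * (∑ j, v j * B j c)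
        - θ c * ((∑ i, u i * A i (τ c)) * (∑ j, v j * B j (ρ c))) with hξ
    have hξnull : NullV D ξ := fun r => keyId u v r
    have hfirst : ∀ c, (∑ i, u i * A i c) * (∑ j, v j * B j c) = 0 := by
      intro c
      by_cases hc : c ∈ E
      · rw [hu0' c hc, zero_mul]
      · rw [hv0' c (by rw [hE']; exact Finset.mem_sdiff.mpr ⟨Finset.mem_univ c, hc⟩), mul_zero]
    have hsupp : supp ξ ⊆ Finset.univ.filter (fun c => ρ c ∈ E) := by
      intro c hc
      rw [mem_supp] at hc
      rw [Finset.mem_filter]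
      refine ⟨Finset.mem_univ c, ?_⟩
      by_contra hρc
      apply hc
      rw [hξ]
      simp only
      rw [hfirst c,
        hv0' (ρ c) (by rw [hE']; exact Finset.mem_sdiff.mpr ⟨Finset.mem_univ _, hρc⟩),
        mul_zero, mul_zero, sub_zero]
    have hfiltercard : (Finset.univ.filter (fun c => ρ c ∈ E)).card = E.card := by
      have himg : Finset.univ.filter (fun c => ρ c ∈ E) = E.image ρ.symm := by
        ext c
        rw [Finset.mem_filter, Finset.mem_image]
        constructor
        · rintro ⟨-, hc⟩
          exact ⟨ρ c, hc, Equiv.symm_apply_apply ρ c⟩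
        · rintro ⟨e, he, rfl⟩
          exact ⟨Finset.mem_univ _, by rwa [Equiv.apply_symm_apply]⟩
      rw [himg, Finset.card_image_of_injective _ (Equiv.injective _)]
    have hwt : (supp ξ).card ≤ kruskalRank D := by
      have h5 := Finset.card_le_card hsupp
      omega
    have hξ0 := kr_null D ξ hξnull hwt
    have hc0ξ := congrFun hξ0 c0
    rw [hξ] at hc0ξ
    simp only [Pi.zero_apply] at hc0ξ
    rw [hfirst c0, zero_sub, neg_eq_zero] at hc0ξ
    have h2 := hu' (τ c0) hxxE
    have h3 : ρ c0 ∉ E' := by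
      rw [hE']
      intro h
      rw [Finset.mem_sdiff] at h
      exact h.2 hyE
    exact (mul_ne_zero (hθ0 c0) (mul_ne_zero h2 (hv' (ρ c0) h3))) hc0ξ

end Kru

/-- Kruskal's theorem: uniqueness of the three-way decomposition
up to simultaneous permutation and rescaling of columns, under the Kruskal-rank
condition `rank_K(A) + rank_K(B) + rank_K(D) ≥ 2C + 2`. -/
theorem stmt10 {I J K C : ℕ} (hC : 1 ≤ C)
    (A Abar : Matrix (Fin I) (Fin C) ℝ)
    (B Bbar : Matrix (Fin J) (Fin C) ℝ)
    (D Dbar : Matrix (Fin K) (Fin C) ℝ)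
    (heq : ∀ i j k, ∑ c, A i c * B j c * D k c = ∑ c, Abar i c * Bbar j c * Dbar k c)
    (hk : kruskalRank A + kruskalRank B + kruskalRank D ≥ 2 * C + 2) :
    ∃ (σ : Equiv.Perm (Fin C)) (a b d : Fin C → ℝ),
      (∀ c, a c ≠ 0 ∧ b c ≠ 0 ∧ d c ≠ 0 ∧ a c * b c * d c = 1) ∧
      (∀ i c, Abar i c = a c * A i (σ c)) ∧
      (∀ j c, Bbar j c = b c * B j (σ c)) ∧
      (∀ k c, Dbar k c = d c * D k (σ c)) :=
  Kru.main hC A Abar B Bbar D Dbar heq hk
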